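/- Let C = (C_1,...,C_n) be a division of a totally ordered n-element set. If C is superdiagonal (|C_1|+...+|C_i| ≥ i for all i), then the number of type B C-permutations equals 1^{|C_1|} 2^{|C_2|} ... n^{|C_n|}; and if C is subdiagonal (|C_n|+...+|C_{n-i+1}| ≥ i for all i), then the number of type B C-permutations equals n!. -/

import Mathlib

open scoped Pointwise
open MeasureTheory Nat

namespace MixedEulerian

/-- A division of a finite set `S` into an ordered sequence of blocks,
with all elements of earlier blocks strictly smaller than those of later blocks. -/
def IsDivision (C : List (Finset ℕ)) (S : Finset ℕ) : Prop :=
  (∀ s ∈ S, ∃ i, i < C.length ∧ s ∈ C.getD i ∅) ∧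
  (∀ i, i < C.length → C.getD i ∅ ⊆ S) ∧
  (∀ i j, i < j → j < C.length →
    ∀ s ∈ C.getD i ∅, ∀ t ∈ C.getD j ∅, s < t)

/-- Type A admissibility: `s ∈ C_i` is admissible iff `s = min C₁`, `s = max C_n`,
or `i` is strictly between the first and the last index. (Indices are 0-based.) -/
def AdmissibleA (C : List (Finset ℕ)) (s : ℕ) : Prop :=
  ∃ i, i < C.length ∧ s ∈ C.getD i ∅ ∧
    ((i = 0 ∧ ∀ t ∈ C.getD 0 ∅, s ≤ t) ∨
     (i = C.length - 1 ∧ ∀ t ∈ C.getD i ∅, t ≤ s) ∨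
     (0 < i ∧ i + 1 < C.length))

/-- Type A deletion of `s` from the division `C`. -/
def deleteA (C : List (Finset ℕ)) (s : ℕ) : List (Finset ℕ) :=
  let i := C.findIdx (fun b => decide (s ∈ b))
  let B := C.getD i ∅
  let lo := B.filter (fun t => t < s)
  let hi := B.filter (fun t => s < t)
  if C.length ≤ 1 then []
  else if i = 0 then (hi ∪ C.getD 1 ∅) :: C.drop 2
  else if i = C.length - 1 then C.take (i - 1) ++ [C.getD (i - 1) ∅ ∪ lo]
  else C.take (i - 1) ++ [C.getD (i - 1) ∅ ∪ lo, hi ∪ C.getD (i + 1) ∅] ++ C.drop (i + 2)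

/-- `w` is a (type A) `C`-permutation: each entry is admissible in the division
obtained by deleting the previous entries, and all elements get deleted. -/
def IsCPermA : List (Finset ℕ) → List ℕ → Prop
  | C, [] => ∀ B ∈ C, B = ∅
  | C, s :: w => AdmissibleA C s ∧ IsCPermA (deleteA C s) w

/-- Type B admissibility: `s ∈ C_i` is admissible iff `s = min C₁` or `i ≠ 0`. -/
def AdmissibleB (C : List (Finset ℕ)) (s : ℕ) : Prop :=
  ∃ i, i < C.length ∧ s ∈ C.getD i ∅ ∧
    ((i = 0 ∧ ∀ t ∈ C.getD 0 ∅, s ≤ t) ∨ i ≠ 0)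

/-- Type B deletion of `s` from the division `C`. -/
def deleteB (C : List (Finset ℕ)) (s : ℕ) : List (Finset ℕ) :=
  let i := C.findIdx (fun b => decide (s ∈ b))
  if i = C.length - 1 ∧ 0 < i then
    C.take (i - 1) ++ [C.getD (i - 1) ∅ ∪ ((C.getD i ∅).erase s)]
  else deleteA C s

/-- `w` is a type B `C`-permutation. -/
def IsCPermB : List (Finset ℕ) → List ℕ → Prop
  | C, [] => ∀ B ∈ C, B = ∅
  | C, s :: w => AdmissibleB C s ∧ IsCPermB (deleteB C s) w

/-- A sequence of elements that can be successively (type A) deleted from `C`. -/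
def AdmissibleSeqA : List (Finset ℕ) → List ℕ → Prop
  | _, [] => True
  | C, s :: w => AdmissibleA C s ∧ AdmissibleSeqA (deleteA C s) w

/-- Number of descents of a list: the number of adjacent pairs that decrease. -/
def listDescents {α : Type*} [LinearOrder α] (l : List α) : ℕ :=
  (l.zip l.tail).countP (fun p => decide (p.2 < p.1))

/-- Eulerian number `A(n,k)`: permutations of `{1,…,n}` with exactly `k-1` descents. -/
def eulerianA (n k : ℕ) : ℕ :=
  (List.range' 1 n).permutations.countP (fun l => decide (listDescents l = k - 1))

/-- `A(m,t;r)`: permutations of `{1,…,m+1}` with `t-1` descents and first entry `r+1`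
(declared to be `0` when `t = 0`; it vanishes automatically when `t > m+1`). -/
def eulerianFirst (m t r : ℕ) : ℕ :=
  if t = 0 then 0 else
    (List.range' 1 (m + 1)).permutations.countP
      (fun l => decide (listDescents l = t - 1 ∧ l.headI = r + 1))

/-- The index of `t` in the `C`-permutation `w`: the (1-based) position of the block
containing `t` just before `t` is deleted. -/
def indexFn (C : List (Finset ℕ)) : List ℕ → ℕ → ℕ
  | [], _ => 0
  | s :: w, t =>
      if t = s then C.findIdx (fun b => decide (t ∈ b)) + 1
      else indexFn (deleteA C s) w t

/-- An index function of `C`: any function sending each element of `C_i` into `{1,…,i}`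
(1-based). -/
def IsIndexFn (C : List (Finset ℕ)) (I : ℕ → ℕ) : Prop :=
  ∀ i, i < C.length → ∀ s ∈ C.getD i ∅, 1 ≤ I s ∧ I s ≤ i + 1

/-- `C` is superdiagonal: `|C₁| + ⋯ + |C_i| ≥ i` for all `i`. -/
def Superdiagonal (C : List (Finset ℕ)) : Prop :=
  ∀ i, i ≤ C.length → i ≤ ∑ j ∈ Finset.range i, (C.getD j ∅).card

/-- `C` is subdiagonal: `|C_n| + ⋯ + |C_{n-i+1}| ≥ i` for all `i`. -/
def Subdiagonal (C : List (Finset ℕ)) : Prop :=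
  ∀ i, i ≤ C.length → i ≤ ∑ j ∈ Finset.range i, (C.getD (C.length - 1 - j) ∅).card

/-- The canonical division of `{1,…,c.sum}` with block sizes given by `c`. -/
def divisionOf (c : List ℕ) : List (Finset ℕ) :=
  (List.range c.length).map (fun i => Finset.Ioc ((c.take i).sum) ((c.take (i + 1)).sum))

/-- The number of `C`-permutations for a division with block sizes `c`. -/
noncomputable def NPerm (c : List ℕ) : ℕ :=
  Nat.card {w : List ℕ // IsCPermA (divisionOf c) w}

/-- The division of `{1,…,n}` with all elements in (1-based) position `k`. -/
def midDivision (n k : ℕ) : List (Finset ℕ) :=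
  List.replicate (k - 1) ∅ ++ [Finset.Icc 1 n] ++ List.replicate (n - k) ∅

/-- The hypersimplex `Δ_{k,n} ⊆ ℝ^{n+1}`. -/
def hypersimplex (n k : ℕ) : Set (Fin (n + 1) → ℝ) :=
  convexHull ℝ {x | ∃ T : Finset (Fin (n + 1)), T.card = k ∧
    x = fun i => if i ∈ T then (1 : ℝ) else 0}

/-- The permutohedron `P(y₁,…,y_m) ⊆ ℝ^m`. -/
def permutohedron {m : ℕ} (y : Fin m → ℝ) : Set (Fin m → ℝ) :=
  convexHull ℝ {x | ∃ w : Equiv.Perm (Fin m), x = y ∘ w}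

/-- The polytope `Γ_{k,n} ⊆ ℝ^n`, the convex hull of all `±e_{i₁} ± ⋯ ± e_{i_k}`. -/
def gammaPolytope (n k : ℕ) : Set (Fin n → ℝ) :=
  convexHull ℝ {x | ∃ T : Finset (Fin n), T.card = k ∧ ∃ ε : Fin n → ℝ,
    (∀ i, ε i = 1 ∨ ε i = -1) ∧ x = fun i => if i ∈ T then ε i else 0}

/-- The signed permutohedron `SP(y₁,…,y_n) ⊆ ℝ^n`. -/
def signedPermutohedron {m : ℕ} (y : Fin m → ℝ) : Set (Fin m → ℝ) :=
  convexHull ℝ {x | ∃ w : Equiv.Perm (Fin m), ∃ ε : Fin m → ℝ,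
    (∀ i, ε i = 1 ∨ ε i = -1) ∧ x = fun i => ε i * y (w i)}


/-! ### Auxiliary development -/

/-- Block ordering relation. -/
def Rb (B B' : Finset ℕ) : Prop := ∀ s ∈ B, ∀ t ∈ B', s < t

/-- Structural form of a division. -/
structure DivS (C : List (Finset ℕ)) (S : Finset ℕ) : Prop where
  cover : ∀ x ∈ S, ∃ B ∈ C, x ∈ B
  sub : ∀ B ∈ C, B ⊆ S
  ord : C.Pairwise Rb

theorem Rb.disjoint {B B' : Finset ℕ} (h : Rb B B') : Disjoint B B' := by
  rw [Finset.disjoint_left]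
  intro a ha ha'
  exact absurd (h a ha a ha') (lt_irrefl a)

theorem Rb.mono {A A' B B' : Finset ℕ} (h : Rb A B) (hA : A' ⊆ A) (hB : B' ⊆ B) :
    Rb A' B' := fun s hs t ht => h s (hA hs) t (hB ht)

theorem Rb.union_left {A A' B : Finset ℕ} (h : Rb A B) (h' : Rb A' B) : Rb (A ∪ A') B := by
  intro s hs t ht
  rcases Finset.mem_union.1 hs with hs | hs
  · exact h s hs t ht
  · exact h' s hs t ht

theorem Rb.union_right {A B B' : Finset ℕ} (h : Rb A B) (h' : Rb A B') : Rb A (B ∪ B') := by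
  intro s hs t ht
  rcases Finset.mem_union.1 ht with ht | ht
  · exact h s hs t ht
  · exact h' s hs t ht

theorem getD_eq_getElem' {C : List (Finset ℕ)} {i : ℕ} (h : i < C.length) :
    C.getD i ∅ = C[i] := List.getD_eq_getElem C ∅ h

/-- An element lies in at most one block of a pairwise-ordered list. -/
theorem mem_block_unique {C : List (Finset ℕ)} (hord : C.Pairwise Rb) {s : ℕ} {i j : ℕ}
    (hi : i < C.length) (hj : j < C.length) (hsi : s ∈ C[i]) (hsj : s ∈ C[j]) : i = j := by
  rcases lt_trichotomy i j with h | h | h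
  · exact absurd ((List.pairwise_iff_getElem.1 hord) i j hi hj h s hsi s hsj) (lt_irrefl s)
  · exact h
  · exact absurd ((List.pairwise_iff_getElem.1 hord) j i hj hi h s hsj s hsi) (lt_irrefl s)

theorem DivS.of_isDivision {C : List (Finset ℕ)} {S : Finset ℕ} (h : IsDivision C S) :
    DivS C S := by
  obtain ⟨h1, h2, h3⟩ := h
  constructor
  · intro x hx
    obtain ⟨i, hi, hmem⟩ := h1 x hx
    exact ⟨C[i], List.getElem_mem hi, by rwa [getD_eq_getElem' hi] at hmem⟩
  · intro B hB
    obtain ⟨i, hi, rfl⟩ := List.mem_iff_getElem.1 hB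
    have := h2 i hi
    rwa [getD_eq_getElem' hi] at this
  · rw [List.pairwise_iff_getElem]
    intro i j hi hj hij s hs t ht
    exact h3 i j hij hj s (by rwa [getD_eq_getElem' hi]) t (by rwa [getD_eq_getElem' hj])

/-- Sum of block sizes. -/
def csum (C : List (Finset ℕ)) : ℕ := (C.map Finset.card).sum

@[simp] theorem csum_nil : csum [] = 0 := rfl
@[simp] theorem csum_cons (B : Finset ℕ) (T : List (Finset ℕ)) :
    csum (B :: T) = B.card + csum T := rfl
@[simp] theorem csum_append (X Y : List (Finset ℕ)) :
    csum (X ++ Y) = csum X + csum Y := by simp [csum]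

/-- Weighted product `k^{|B₁|} (k+1)^{|B₂|} ⋯`. -/
def Wt : List (Finset ℕ) → ℕ → ℕ
  | [], _ => 1
  | B :: T, k => k ^ B.card * Wt T (k + 1)

@[simp] theorem Wt_nil (k : ℕ) : Wt [] k = 1 := rfl
@[simp] theorem Wt_cons (B : Finset ℕ) (T : List (Finset ℕ)) (k : ℕ) :
    Wt (B :: T) k = k ^ B.card * Wt T (k + 1) := rfl

theorem Wt_append (X Y : List (Finset ℕ)) (k : ℕ) :
    Wt (X ++ Y) k = Wt X k * Wt Y (k + X.length) := by
  induction X generalizing k with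
  | nil => simp
  | cons B T ih =>
      simp only [List.cons_append, Wt_cons, ih (k + 1), List.length_cons]
      ring_nf

theorem DivS.tail {B : Finset ℕ} {T : List (Finset ℕ)} {S : Finset ℕ}
    (h : DivS (B :: T) S) : DivS T (S \ B) := by
  have hord := h.ord
  rw [List.pairwise_cons] at hord
  constructor
  · intro x hx
    rw [Finset.mem_sdiff] at hx
    obtain ⟨B', hB', hmem⟩ := h.cover x hx.1
    rcases List.mem_cons.1 hB' with rfl | hB'
    · exact absurd hmem hx.2
    · exact ⟨B', hB', hmem⟩
  · intro B' hB' x hx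
    rw [Finset.mem_sdiff]
    refine ⟨h.sub B' (List.mem_cons_of_mem _ hB') hx, fun hxB => ?_⟩
    exact absurd (hord.1 B' hB' x hxB x hx) (lt_irrefl x)
  · exact hord.2

theorem DivS.csum_eq {C : List (Finset ℕ)} {S : Finset ℕ} (h : DivS C S) :
    csum C = S.card := by
  induction C generalizing S with
  | nil =>
      have : S = ∅ := by
        rw [Finset.eq_empty_iff_forall_notMem]
        intro x hx
        obtain ⟨B, hB, -⟩ := h.cover x hx
        exact absurd hB (fun h => List.not_mem_nil h)
      simp [this]
  | cons B T ih =>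
      have hsub : B ⊆ S := h.sub B List.mem_cons_self
      have := Finset.card_le_card hsub
      rw [csum_cons, ih h.tail, Finset.card_sdiff_of_subset hsub]
      omega
theorem DivS.sum_blocks {C : List (Finset ℕ)} {S : Finset ℕ} (h : DivS C S) (g : ℕ → ℕ) :
    ∑ s ∈ S, g s = (C.map (fun B => ∑ x ∈ B, g x)).sum := by
  induction C generalizing S with
  | nil =>
      have : S = ∅ := by
        rw [Finset.eq_empty_iff_forall_notMem]
        intro x hx
        obtain ⟨B, hB, -⟩ := h.cover x hx
        exact absurd hB (fun h => List.not_mem_nil h)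
      simp [this]
  | cons B T ih =>
      have hsub : B ⊆ S := h.sub B List.mem_cons_self
      rw [List.map_cons, List.sum_cons, ← ih h.tail, ← Finset.sum_sdiff hsub]
      omega

/-- Superdiagonality, suffix form. -/
def SDs (C : List (Finset ℕ)) : Prop := ∀ V, V <:+ C → csum V ≤ V.length

/-- Subdiagonality, suffix form. -/
def SBs (C : List (Finset ℕ)) : Prop := ∀ V, V <:+ C → V.length ≤ csum V

theorem csum_take (C : List (Finset ℕ)) : ∀ i, i ≤ C.length →
    ∑ j ∈ Finset.range i, (C.getD j ∅).card = csum (C.take i) := by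
  intro i hi
  induction i with
  | zero => simp
  | succ m ih =>
      have hm : m < C.length := hi
      have h2 : csum (C.take (m+1)) = csum (C.take m) + C[m].card := by
        rw [List.take_succ, List.getElem?_eq_getElem hm, csum_append]
        simp [csum]
      rw [Finset.sum_range_succ, ih (le_of_lt hm), getD_eq_getElem' hm, h2]

theorem csum_drop_rev (C : List (Finset ℕ)) : ∀ i, i ≤ C.length →
    ∑ j ∈ Finset.range i, (C.getD (C.length - 1 - j) ∅).card = csum (C.drop (C.length - i)) := by
  intro i hi
  induction i with
  | zero => simp
  | succ m ih =>
      have hm : C.length - 1 - m < C.length := by omega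
      have hdrop : C.drop (C.length - (m + 1)) = C[C.length - 1 - m] :: C.drop (C.length - m) := by
        have h1 : C.length - (m + 1) < C.length := by omega
        rw [List.drop_eq_getElem_cons h1]
        congr 2 <;> omega
      rw [Finset.sum_range_succ, ih (by omega), hdrop, csum_cons, getD_eq_getElem' hm]
      omega

theorem superdiagonal_iff {C : List (Finset ℕ)} (htot : csum C = C.length) :
    Superdiagonal C ↔ SDs C := by
  constructor
  · intro h V hV
    obtain ⟨U, rfl⟩ := hV
    have hU : U = (U ++ V).take U.length := by simp
    have hV' : V = (U ++ V).drop U.length := by simp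
    have hlen : U.length ≤ (U ++ V).length := by simp
    have := h U.length hlen
    rw [csum_take _ _ hlen, ← hU] at this
    have htot' : csum U + csum V = U.length + V.length := by
      simpa using htot
    omega
  · intro h i hi
    rw [csum_take _ _ hi]
    have h1 : C.drop i <:+ C := List.drop_suffix i C
    have h2 := h _ h1
    have h3 : csum (C.take i) + csum (C.drop i) = csum C := by
      rw [← csum_append, List.take_append_drop]
    have h4 : (C.drop i).length = C.length - i := List.length_drop
    omega

theorem subdiagonal_iff {C : List (Finset ℕ)} :
    Subdiagonal C ↔ SBs C := by
  constructor
  · intro h V hV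
    obtain ⟨U, rfl⟩ := hV
    have hlen : V.length ≤ (U ++ V).length := by simp
    have := h V.length hlen
    rw [csum_drop_rev _ _ hlen] at this
    have : V.length ≤ csum ((U ++ V).drop ((U ++ V).length - V.length)) := this
    rwa [show (U ++ V).length - V.length = U.length by simp, List.drop_left] at this
  · intro h i hi
    rw [csum_drop_rev _ _ hi]
    have h2 := h _ (List.drop_suffix (C.length - i) C)
    have h4 : (C.drop (C.length - i)).length = C.length - (C.length - i) := List.length_drop
    omega

theorem findIdx_decomp {X Y : List (Finset ℕ)} {B : Finset ℕ} {s : ℕ}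
    (hX : ∀ B' ∈ X, s ∉ B') (hB : s ∈ B) :
    (X ++ B :: Y).findIdx (fun b => decide (s ∈ b)) = X.length := by
  induction X with
  | nil => simp [List.findIdx_cons, hB]
  | cons P X' ih =>
      have hP : s ∉ P := hX P List.mem_cons_self
      have hPd : (decide (s ∈ P)) = false := decide_eq_false_iff_not.2 hP
      simp only [List.cons_append, List.findIdx_cons, hPd, cond_false, List.length_cons]
      rw [ih (fun B' hB' => hX B' (List.mem_cons_of_mem _ hB'))]

theorem block_decomp {C : List (Finset ℕ)} {S : Finset ℕ} (hdiv : DivS C S) {s : ℕ}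
    (hs : s ∈ S) : ∃ X B Y, C = X ++ B :: Y ∧ s ∈ B := by
  obtain ⟨B, hB, hmem⟩ := hdiv.cover s hs
  obtain ⟨X, Y, rfl⟩ := List.append_of_mem hB
  exact ⟨X, B, Y, rfl, hmem⟩

theorem not_mem_of_decomp {X Y : List (Finset ℕ)} {B : Finset ℕ}
    (hord : (X ++ B :: Y).Pairwise Rb) {s : ℕ} (hB : s ∈ B) :
    (∀ B' ∈ X, s ∉ B') ∧ (∀ B' ∈ Y, s ∉ B') := by
  rw [List.pairwise_append] at hord
  have h2 := hord.2.1
  rw [List.pairwise_cons] at h2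
  constructor
  · intro B' hB' hmem
    exact absurd (hord.2.2 B' hB' B List.mem_cons_self s hmem s hB) (lt_irrefl s)
  · intro B' hB' hmem
    exact absurd (h2.1 B' hB' s hB s hmem) (lt_irrefl s)
theorem getD_append_length : ∀ (X : List (Finset ℕ)) (B : Finset ℕ) (Y : List (Finset ℕ)),
    (X ++ B :: Y).getD X.length ∅ = B
  | [], B, Y => rfl
  | P :: X', B, Y => by simpa using getD_append_length X' B Y

theorem filter_gt_of_min {B : Finset ℕ} {s : ℕ} (hs : s ∈ B) (hmin : ∀ t ∈ B, s ≤ t) :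
    B.filter (fun t => s < t) = B.erase s := by
  ext t
  simp only [Finset.mem_filter, Finset.mem_erase]
  constructor
  · rintro ⟨ht, hlt⟩
    exact ⟨(_root_.ne_of_lt hlt).symm, ht⟩
  · rintro ⟨hne, ht⟩
    exact ⟨ht, lt_of_le_of_ne (hmin t ht) (Ne.symm hne)⟩

theorem deleteB_single {B : Finset ℕ} {s : ℕ} (hs : s ∈ B) : deleteB [B] s = [] := by
  have hidx : ([B] : List (Finset ℕ)).findIdx (fun b => decide (s ∈ b)) = 0 := by
    simp [List.findIdx_cons, hs]
  simp [deleteB, deleteA, hidx]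

theorem deleteB_min {B Y0 : Finset ℕ} {Y' : List (Finset ℕ)} {s : ℕ}
    (hs : s ∈ B) (hmin : ∀ t ∈ B, s ≤ t) :
    deleteB (B :: Y0 :: Y') s = (B.erase s ∪ Y0) :: Y' := by
  have hidx : (B :: Y0 :: Y').findIdx (fun b => decide (s ∈ b)) = 0 := by
    simp [List.findIdx_cons, hs]
  simp only [deleteB, deleteA, hidx]
  rw [if_neg (by simp), if_pos trivial]
  simp [filter_gt_of_min hs hmin]

theorem deleteB_last {X' : List (Finset ℕ)} {P B : Finset ℕ} {s : ℕ}
    (hord : (X' ++ [P, B]).Pairwise Rb) (hs : s ∈ B) :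
    deleteB (X' ++ [P, B]) s = X' ++ [P ∪ B.erase s] := by
  have hassoc : X' ++ [P, B] = (X' ++ [P]) ++ B :: [] := by simp
  have hX : ∀ B' ∈ X' ++ [P], s ∉ B' :=
    (not_mem_of_decomp (by rw [← hassoc]; exact hord) hs).1
  have hidx : (X' ++ [P, B]).findIdx (fun b => decide (s ∈ b)) = X'.length + 1 := by
    rw [hassoc]
    simpa using findIdx_decomp hX hs
  have hlen : (X' ++ [P, B]).length = X'.length + 2 := by simp
  simp only [deleteB, hidx, hlen]
  rw [if_pos (by omega)]
  have htake : (X' ++ [P, B]).take (X'.length + 1 - 1) = X' := by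
    simpa using List.take_left X' [P, B]
  have hgetP : (X' ++ [P, B]).getD (X'.length + 1 - 1) ∅ = P := by
    simpa using getD_append_length X' P [B]
  have hgetB : (X' ++ [P, B]).getD (X'.length + 1) ∅ = B := by
    have := getD_append_length (X' ++ [P]) B []
    simpa using this
  rw [htake, hgetP, hgetB]

theorem deleteB_mid {X' : List (Finset ℕ)} {P B Y0 : Finset ℕ} {Y' : List (Finset ℕ)} {s : ℕ}
    (hord : (X' ++ P :: B :: Y0 :: Y').Pairwise Rb) (hs : s ∈ B) :
    deleteB (X' ++ P :: B :: Y0 :: Y') s =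
      X' ++ (P ∪ B.filter (fun t => t < s)) :: ((B.filter (fun t => s < t)) ∪ Y0) :: Y' := by
  have hassoc : X' ++ P :: B :: Y0 :: Y' = (X' ++ [P]) ++ B :: Y0 :: Y' := by simp
  have hX : ∀ B' ∈ X' ++ [P], s ∉ B' :=
    (not_mem_of_decomp (by rw [← hassoc]; exact hord) hs).1
  have hidx : (X' ++ P :: B :: Y0 :: Y').findIdx (fun b => decide (s ∈ b)) = X'.length + 1 := by
    rw [hassoc]
    simpa using findIdx_decomp hX hs
  have hlen : (X' ++ P :: B :: Y0 :: Y').length = X'.length + 3 + Y'.length := by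
    simp only [List.length_append, List.length_cons]
    omega
  simp only [deleteB, deleteA, hidx, hlen]
  rw [if_neg (by omega)]
  rw [if_neg (by omega)]
  rw [if_neg (by omega)]
  rw [if_neg (by omega)]
  have htake : (X' ++ P :: B :: Y0 :: Y').take (X'.length + 1 - 1) = X' := by
    simpa using List.take_left X' (P :: B :: Y0 :: Y')
  have hgetP : (X' ++ P :: B :: Y0 :: Y').getD (X'.length + 1 - 1) ∅ = P := by
    simpa using getD_append_length X' P (B :: Y0 :: Y')
  have hgetB : (X' ++ P :: B :: Y0 :: Y').getD (X'.length + 1) ∅ = B := by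
    have := getD_append_length (X' ++ [P]) B (Y0 :: Y')
    simpa using this
  have hgetY0 : (X' ++ P :: B :: Y0 :: Y').getD (X'.length + 1 + 1) ∅ = Y0 := by
    have := getD_append_length (X' ++ [P, B]) Y0 Y'
    simpa [add_assoc] using this
  have hdrop : (X' ++ P :: B :: Y0 :: Y').drop (X'.length + 1 + 2) = Y' := by
    have h1 : X' ++ P :: B :: Y0 :: Y' = (X' ++ [P, B, Y0]) ++ Y' := by simp
    have h2 : (X' ++ [P, B, Y0]).length = X'.length + 1 + 2 := by
      simp only [List.length_append, List.length_cons, List.length_nil]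
    rw [h1, ← h2, List.drop_left]
  rw [htake, hgetP, hgetB, hgetY0, hdrop]
  simp
theorem erase_eq_lo_union_hi {B : Finset ℕ} {s : ℕ} :
    B.erase s = B.filter (fun t => t < s) ∪ B.filter (fun t => s < t) := by
  ext t
  simp only [Finset.mem_erase, Finset.mem_filter, Finset.mem_union]
  constructor
  · rintro ⟨h1, h2⟩
    rcases h1.lt_or_gt with h | h
    · exact Or.inl ⟨h2, h⟩
    · exact Or.inr ⟨h2, h⟩
  · rintro (⟨h1, h2⟩ | ⟨h1, h2⟩) <;> exact ⟨by omega, h1⟩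

theorem disjoint_lo_hi {B : Finset ℕ} {s : ℕ} :
    Disjoint (B.filter (fun t => t < s)) (B.filter (fun t => s < t)) := by
  rw [Finset.disjoint_left]
  intro a ha ha'
  simp only [Finset.mem_filter] at ha ha'
  omega

theorem lo_hi_card {B : Finset ℕ} {s : ℕ} (hs : s ∈ B) :
    (B.filter (fun t => t < s)).card + (B.filter (fun t => s < t)).card + 1 = B.card := by
  have h1 := Finset.card_erase_of_mem hs
  rw [erase_eq_lo_union_hi (s := s), Finset.card_union_of_disjoint disjoint_lo_hi] at h1
  have h2 : 1 ≤ B.card := Finset.card_pos.2 ⟨s, hs⟩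
  omega

theorem Rb.lo_hi {B : Finset ℕ} {s : ℕ} :
    Rb (B.filter (fun t => t < s)) (B.filter (fun t => s < t)) := by
  intro a ha b hb
  simp only [Finset.mem_filter] at ha hb
  omega

theorem suffix_cases {α : Type*} {V l₁ l₂ : List α} {a : α} (h : V <:+ l₁ ++ a :: l₂) :
    V <:+ l₂ ∨ ∃ V₁, V₁ <:+ l₁ ∧ V = V₁ ++ a :: l₂ := by
  obtain ⟨U, hU⟩ := h
  rcases List.append_eq_append_iff.1 hU with ⟨a', h1, h2⟩ | ⟨c', h1, h2⟩
  · exact Or.inr ⟨a', ⟨U, h1.symm⟩, h2⟩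
  · cases c' with
    | nil =>
        refine Or.inr ⟨[], List.nil_suffix, ?_⟩
        simpa using h2.symm
    | cons b c'' =>
        left
        have : l₂ = c'' ++ V := by
          have := h2
          simp only [List.cons_append] at this
          exact (List.cons.injEq .. ▸ this).2
        exact ⟨c'', this.symm⟩

theorem suffix_cons_cases {α : Type*} {V l : List α} {a : α} (h : V <:+ a :: l) :
    V <:+ l ∨ V = a :: l := by
  have := suffix_cases (l₁ := []) (a := a) (l₂ := l) (by simpa using h)
  rcases this with h' | ⟨V₁, hV₁, rfl⟩
  · exact Or.inl h'
  · right
    rw [List.suffix_nil.1 hV₁]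
    rfl

theorem suffix_append_of_suffix {α : Type*} {V₁ X : List α} (h : V₁ <:+ X) (L : List α) :
    V₁ ++ L <:+ X ++ L := by
  obtain ⟨U, rfl⟩ := h
  exact ⟨U, by simp⟩
theorem shape_single_spec {B S : Finset ℕ} {s : ℕ} (hdiv : DivS [B] S)
    (hone : S.card = 1) (hs : s ∈ B) :
    DivS ([] : List (Finset ℕ)) (S.erase s) := by
  have hsS : s ∈ S := hdiv.sub B (by simp) hs
  obtain ⟨a, ha⟩ := Finset.card_eq_one.1 hone
  have : s = a := by rw [ha] at hsS; simpa using hsS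
  subst this
  constructor
  · intro x hx
    rw [ha] at hx
    simp at hx
  · intro B' hB'
    simp at hB'
  · simp

theorem shape_min_spec {B Y0 : Finset ℕ} {Y' : List (Finset ℕ)} {S : Finset ℕ} {s : ℕ}
    (hdiv : DivS (B :: Y0 :: Y') S) (hs : s ∈ B) :
    DivS ((B.erase s ∪ Y0) :: Y') (S.erase s) ∧
    (SDs (B :: Y0 :: Y') → SDs ((B.erase s ∪ Y0) :: Y')) ∧
    (SBs (B :: Y0 :: Y') → SBs ((B.erase s ∪ Y0) :: Y')) := by
  have hord := hdiv.ord
  have hnm := (not_mem_of_decomp (X := []) hord hs).2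
  rw [List.pairwise_cons] at hord
  obtain ⟨hB, hord⟩ := hord
  rw [List.pairwise_cons] at hord
  obtain ⟨hY0, hpY'⟩ := hord
  have hRBY0 : Rb B Y0 := hB Y0 (by simp)
  have hcard : (B.erase s ∪ Y0).card = B.card - 1 + Y0.card := by
    rw [Finset.card_union_of_disjoint ((hRBY0.mono (Finset.erase_subset s B) (le_refl _)).disjoint),
      Finset.card_erase_of_mem hs]
  have hBpos : 1 ≤ B.card := Finset.card_pos.2 ⟨s, hs⟩
  refine ⟨⟨?_, ?_, ?_⟩, ?_, ?_⟩
  · intro x hx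
    rw [Finset.mem_erase] at hx
    obtain ⟨B'', hB'', hmem⟩ := hdiv.cover x hx.2
    rcases List.mem_cons.1 hB'' with rfl | hB''
    · exact ⟨B''.erase s ∪ Y0, by simp, Finset.mem_union_left _ (Finset.mem_erase.2 ⟨hx.1, hmem⟩)⟩
    rcases List.mem_cons.1 hB'' with rfl | hB''
    · exact ⟨B.erase s ∪ B'', by simp, Finset.mem_union_right _ hmem⟩
    · exact ⟨B'', by simp [hB''], hmem⟩
  · intro B' hB'
    rcases List.mem_cons.1 hB' with rfl | hB'
    · rw [Finset.union_subset_iff]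
      constructor
      · exact Finset.erase_subset_erase s (hdiv.sub B (by simp))
      · rw [Finset.subset_erase]
        exact ⟨hdiv.sub Y0 (by simp), hnm Y0 (by simp)⟩
    · rw [Finset.subset_erase]
      exact ⟨hdiv.sub B' (by simp [hB']), hnm B' (by simp [hB'])⟩
  · rw [List.pairwise_cons]
    refine ⟨?_, hpY'⟩
    intro b hb
    exact Rb.union_left ((hB b (by simp [hb])).mono (Finset.erase_subset s B) (le_refl _))
      (hY0 b hb)
  · intro hSD V hV
    rcases suffix_cons_cases hV with hV' | rfl
    · exact hSD V (hV'.trans ⟨[B, Y0], by simp⟩)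
    · have h1 := hSD (B :: Y0 :: Y') (List.suffix_refl _)
      simp only [csum_cons, List.length_cons] at h1 ⊢
      omega
  · intro hSB V hV
    rcases suffix_cons_cases hV with hV' | rfl
    · exact hSB V (hV'.trans ⟨[B, Y0], by simp⟩)
    · have h1 := hSB (Y0 :: Y') ⟨[B], by simp⟩
      simp only [csum_cons, List.length_cons] at h1 ⊢
      omega

theorem shape_last_spec {X' : List (Finset ℕ)} {P B : Finset ℕ} {S : Finset ℕ} {s : ℕ}
    (hdiv : DivS (X' ++ [P, B]) S) (hs : s ∈ B) :
    DivS (X' ++ [P ∪ B.erase s]) (S.erase s) ∧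
    (SDs (X' ++ [P, B]) → SDs (X' ++ [P ∪ B.erase s])) ∧
    (SBs (X' ++ [P, B]) → SBs (X' ++ [P ∪ B.erase s])) := by
  have hord := hdiv.ord
  have hassoc : X' ++ [P, B] = (X' ++ [P]) ++ B :: [] := by simp
  have hnm := (not_mem_of_decomp (by rw [← hassoc]; exact hord) hs).1
  have hsP : s ∉ P := hnm P (by simp)
  have hsX' : ∀ B' ∈ X', s ∉ B' := fun B' h => hnm B' (by simp [h])
  rw [List.pairwise_append] at hord
  obtain ⟨hpX, hpR, hcross⟩ := hord
  rw [List.pairwise_cons] at hpR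
  obtain ⟨hP, -⟩ := hpR
  have hRPB : Rb P B := hP B (by simp)
  have hcard : (P ∪ B.erase s).card = P.card + (B.card - 1) := by
    rw [Finset.card_union_of_disjoint ((hRPB.mono (le_refl _) (Finset.erase_subset s B)).disjoint),
      Finset.card_erase_of_mem hs]
  have hBpos : 1 ≤ B.card := Finset.card_pos.2 ⟨s, hs⟩
  refine ⟨⟨?_, ?_, ?_⟩, ?_, ?_⟩
  · intro x hx
    rw [Finset.mem_erase] at hx
    obtain ⟨B'', hB'', hmem⟩ := hdiv.cover x hx.2
    rcases List.mem_append.1 hB'' with hB'' | hB''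
    · exact ⟨B'', List.mem_append_left _ hB'', hmem⟩
    rcases List.mem_cons.1 hB'' with rfl | hB''
    · exact ⟨B'' ∪ B.erase s, by simp, Finset.mem_union_left _ hmem⟩
    rcases List.mem_cons.1 hB'' with rfl | hB''
    · exact ⟨P ∪ B''.erase s, by simp, Finset.mem_union_right _ (Finset.mem_erase.2 ⟨hx.1, hmem⟩)⟩
    · simp at hB''
  · intro B' hB'
    rcases List.mem_append.1 hB' with hB' | hB'
    · rw [Finset.subset_erase]
      exact ⟨hdiv.sub B' (by simp [hB']), hsX' B' hB'⟩
    · simp only [List.mem_singleton] at hB'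
      subst hB'
      rw [Finset.union_subset_iff]
      constructor
      · rw [Finset.subset_erase]
        exact ⟨hdiv.sub P (by simp), hsP⟩
      · exact (Finset.erase_subset_erase s (hdiv.sub B (by simp)))
  · rw [List.pairwise_append]
    refine ⟨hpX, by simp, ?_⟩
    intro a ha b hb
    simp only [List.mem_singleton] at hb
    subst hb
    exact Rb.union_right (hcross a ha P (by simp))
      ((hcross a ha B (by simp)).mono (le_refl _) (Finset.erase_subset s B))
  · intro hSD V hV
    rcases suffix_cases hV with hV' | ⟨V₁, hV₁, rfl⟩
    · rw [List.suffix_nil.1 hV']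
      simp
    · have h1 := hSD (V₁ ++ [P, B]) (suffix_append_of_suffix hV₁ [P, B])
      simp only [csum_append, csum_cons, csum_nil, List.length_append, List.length_cons,
        List.length_nil, hcard] at h1 ⊢
      omega
  · intro hSB V hV
    rcases suffix_cases hV with hV' | ⟨V₁, hV₁, rfl⟩
    · rw [List.suffix_nil.1 hV']
      simp
    · have h1 := hSB (V₁ ++ [P, B]) (suffix_append_of_suffix hV₁ [P, B])
      simp only [csum_append, csum_cons, csum_nil, List.length_append, List.length_cons,
        List.length_nil, hcard] at h1 ⊢
      omega
theorem shape_mid_spec {X' : List (Finset ℕ)} {P B Y0 : Finset ℕ} {Y' : List (Finset ℕ)}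
    {S : Finset ℕ} {s : ℕ} (hdiv : DivS (X' ++ P :: B :: Y0 :: Y') S) (hs : s ∈ B) :
    DivS (X' ++ (P ∪ B.filter (fun t => t < s)) :: ((B.filter (fun t => s < t)) ∪ Y0) :: Y')
      (S.erase s) ∧
    (SDs (X' ++ P :: B :: Y0 :: Y') →
      SDs (X' ++ (P ∪ B.filter (fun t => t < s)) :: ((B.filter (fun t => s < t)) ∪ Y0) :: Y')) ∧
    (SBs (X' ++ P :: B :: Y0 :: Y') →
      SBs (X' ++ (P ∪ B.filter (fun t => t < s)) :: ((B.filter (fun t => s < t)) ∪ Y0) :: Y')) := by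
  set lo := B.filter (fun t => t < s) with hlo
  set hi := B.filter (fun t => s < t) with hhi
  have hord := hdiv.ord
  have hassoc : X' ++ P :: B :: Y0 :: Y' = (X' ++ [P]) ++ B :: Y0 :: Y' := by simp
  have hnm := not_mem_of_decomp (by rw [← hassoc]; exact hord) hs
  have hsP : s ∉ P := hnm.1 P (by simp)
  have hsX' : ∀ B' ∈ X', s ∉ B' := fun B' h => hnm.1 B' (by simp [h])
  have hsY0 : s ∉ Y0 := hnm.2 Y0 (by simp)
  have hsY' : ∀ B' ∈ Y', s ∉ B' := fun B' h => hnm.2 B' (by simp [h])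
  rw [List.pairwise_append] at hord
  obtain ⟨hpX, hpR, hcross⟩ := hord
  rw [List.pairwise_cons] at hpR
  obtain ⟨hP, hpR⟩ := hpR
  rw [List.pairwise_cons] at hpR
  obtain ⟨hB, hpR⟩ := hpR
  rw [List.pairwise_cons] at hpR
  obtain ⟨hY0, hpY'⟩ := hpR
  have hloB : lo ⊆ B := Finset.filter_subset _ _
  have hhiB : hi ⊆ B := Finset.filter_subset _ _
  have hRPB : Rb P B := hP B (by simp)
  have hRBY0 : Rb B Y0 := hB Y0 (by simp)
  have hslo : s ∉ lo := by simp [hlo]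
  have hshi : s ∉ hi := by simp [hhi]
  have hcard1 : (P ∪ lo).card = P.card + lo.card :=
    Finset.card_union_of_disjoint ((hRPB.mono (le_refl _) hloB).disjoint)
  have hcard2 : (hi ∪ Y0).card = hi.card + Y0.card :=
    Finset.card_union_of_disjoint ((hRBY0.mono hhiB (le_refl _)).disjoint)
  have hcard3 : lo.card + hi.card + 1 = B.card := lo_hi_card hs
  refine ⟨⟨?_, ?_, ?_⟩, ?_, ?_⟩
  · -- cover
    intro x hx
    rw [Finset.mem_erase] at hx
    obtain ⟨B'', hB'', hmem⟩ := hdiv.cover x hx.2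
    rcases List.mem_append.1 hB'' with hB'' | hB''
    · exact ⟨B'', List.mem_append_left _ hB'', hmem⟩
    rcases List.mem_cons.1 hB'' with rfl | hB''
    · exact ⟨B'' ∪ lo, by simp, Finset.mem_union_left _ hmem⟩
    rcases List.mem_cons.1 hB'' with rfl | hB''
    · rcases hx.1.lt_or_gt with h | h
      · exact ⟨P ∪ lo, by simp, Finset.mem_union_right _ (Finset.mem_filter.2 ⟨hmem, h⟩)⟩
      · exact ⟨hi ∪ Y0, by simp, Finset.mem_union_left _ (Finset.mem_filter.2 ⟨hmem, h⟩)⟩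
    rcases List.mem_cons.1 hB'' with rfl | hB''
    · exact ⟨hi ∪ B'', by simp, Finset.mem_union_right _ hmem⟩
    · exact ⟨B'', by simp [hB''], hmem⟩
  · -- sub
    intro B' hB'
    rcases List.mem_append.1 hB' with hB' | hB'
    · rw [Finset.subset_erase]
      exact ⟨hdiv.sub B' (by simp [hB']), hsX' B' hB'⟩
    rcases List.mem_cons.1 hB' with rfl | hB'
    · rw [Finset.union_subset_iff, Finset.subset_erase, Finset.subset_erase]
      exact ⟨⟨hdiv.sub P (by simp), hsP⟩,
        ⟨(hloB.trans (hdiv.sub B (by simp))), hslo⟩⟩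
    rcases List.mem_cons.1 hB' with rfl | hB'
    · rw [Finset.union_subset_iff, Finset.subset_erase, Finset.subset_erase]
      exact ⟨⟨(hhiB.trans (hdiv.sub B (by simp))), hshi⟩,
        ⟨hdiv.sub Y0 (by simp), hsY0⟩⟩
    · rw [Finset.subset_erase]
      exact ⟨hdiv.sub B' (by simp [hB']), hsY' B' hB'⟩
  · -- ord
    rw [List.pairwise_append]
    refine ⟨hpX, ?_, ?_⟩
    · rw [List.pairwise_cons]
      constructor
      · intro b hb
        rcases List.mem_cons.1 hb with rfl | hb
        · exact Rb.union_left (Rb.union_right (hRPB.mono (le_refl _) hhiB)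
            (hP Y0 (by simp))) (Rb.union_right (Rb.lo_hi) (hRBY0.mono hloB (le_refl _)))
        · exact Rb.union_left ((hP b (by simp [hb])))
            ((hB b (by simp [hb])).mono hloB (le_refl _))
      · rw [List.pairwise_cons]
        refine ⟨?_, hpY'⟩
        intro b hb
        exact Rb.union_left ((hB b (by simp [hb])).mono hhiB (le_refl _)) (hY0 b hb)
    · intro a ha b hb
      rcases List.mem_cons.1 hb with rfl | hb
      · exact Rb.union_right (hcross a ha P (by simp))
          ((hcross a ha B (by simp)).mono (le_refl _) hloB)
      rcases List.mem_cons.1 hb with rfl | hb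
      · exact Rb.union_right ((hcross a ha B (by simp)).mono (le_refl _) hhiB)
          (hcross a ha Y0 (by simp))
      · exact hcross a ha b (by simp [hb])
  · -- SDs
    intro hSD V hV
    rcases suffix_cases hV with hV' | ⟨V₁, hV₁, rfl⟩
    · rcases suffix_cons_cases hV' with hV'' | rfl
      · exact hSD V (hV''.trans ⟨X' ++ [P, B, Y0], by simp⟩)
      · have h1 := hSD (B :: Y0 :: Y') ⟨X' ++ [P], by simp⟩
        simp only [csum_cons, List.length_cons, hcard2] at h1 ⊢
        omega
    · have h1 := hSD (V₁ ++ P :: B :: Y0 :: Y') (suffix_append_of_suffix hV₁ _)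
      simp only [csum_append, csum_cons, List.length_append, List.length_cons,
        hcard1, hcard2] at h1 ⊢
      omega
  · -- SBs
    intro hSB V hV
    rcases suffix_cases hV with hV' | ⟨V₁, hV₁, rfl⟩
    · rcases suffix_cons_cases hV' with hV'' | rfl
      · exact hSB V (hV''.trans ⟨X' ++ [P, B, Y0], by simp⟩)
      · have h1 := hSB (Y0 :: Y') ⟨X' ++ [P, B], by simp⟩
        simp only [csum_cons, List.length_cons, hcard2] at h1 ⊢
        omega
    · have h1 := hSB (V₁ ++ P :: B :: Y0 :: Y') (suffix_append_of_suffix hV₁ _)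
      simp only [csum_append, csum_cons, List.length_append, List.length_cons,
        hcard1, hcard2] at h1 ⊢
      omega
theorem admissibleB_iff {C : List (Finset ℕ)} {S : Finset ℕ} {s : ℕ} (hdiv : DivS C S) :
    AdmissibleB C s ↔ s ∈ S ∧ (s ∉ C.getD 0 ∅ ∨ ∀ t ∈ C.getD 0 ∅, s ≤ t) := by
  constructor
  · rintro ⟨i, hi, hmem, hcase⟩
    rw [getD_eq_getElem' hi] at hmem
    refine ⟨hdiv.sub C[i] (List.getElem_mem hi) hmem, ?_⟩
    rcases hcase with ⟨rfl, hmin⟩ | hne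
    · exact Or.inr hmin
    · left
      intro hmem0
      have h0 : 0 < C.length := by omega
      rw [getD_eq_getElem' h0] at hmem0
      exact hne (mem_block_unique hdiv.ord hi h0 hmem hmem0)
  · rintro ⟨hsS, hcase⟩
    obtain ⟨X, B, Y, rfl, hs⟩ := block_decomp hdiv hsS
    have hi : X.length < (X ++ B :: Y).length := by simp
    have hmem : (X ++ B :: Y).getD X.length ∅ = B := getD_append_length X B Y
    cases X with
    | nil =>
        refine ⟨0, hi, by simpa using hs, Or.inl ⟨rfl, ?_⟩⟩
        rcases hcase with h | h
        · exact absurd (by simpa using hs) h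
        · exact h
    | cons P X'' =>
        exact ⟨(P :: X'').length, hi, by rw [hmem]; exact hs, Or.inr (by simp)⟩

theorem SDs_nil : SDs ([] : List (Finset ℕ)) := by
  intro V hV
  rw [List.suffix_nil.1 hV]
  simp

theorem SBs_nil : SBs ([] : List (Finset ℕ)) := by
  intro V hV
  rw [List.suffix_nil.1 hV]
  simp

theorem delete_spec {C : List (Finset ℕ)} {S : Finset ℕ} {s : ℕ} (hdiv : DivS C S)
    (hlen : C.length = S.card) (hadm : AdmissibleB C s) :
    s ∈ S ∧ DivS (deleteB C s) (S.erase s) ∧ (deleteB C s).length = C.length - 1 ∧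
    (SDs C → SDs (deleteB C s)) ∧ (SBs C → SBs (deleteB C s)) := by
  have hchar := (admissibleB_iff hdiv).1 hadm
  have hsS := hchar.1
  obtain ⟨X, B, Y, hC, hs⟩ := block_decomp hdiv hsS
  subst hC
  refine ⟨hsS, ?_⟩
  rcases List.eq_nil_or_concat X with rfl | ⟨X', P, rfl⟩
  · -- head block
    have hmin : ∀ t ∈ B, s ≤ t := by
      rcases hchar.2 with h | h
      · exact absurd (by simpa using hs) h
      · simpa using h
    cases Y with
    | nil =>
        rw [show ([] : List (Finset ℕ)) ++ [B] = [B] from rfl] at hdiv hlen ⊢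
        rw [deleteB_single hs]
        have hone : S.card = 1 := by simpa using hlen.symm
        exact ⟨shape_single_spec (by simpa using hdiv) hone hs, by simp,
          fun _ => SDs_nil, fun _ => SBs_nil⟩
    | cons Y0 Y' =>
        rw [show ([] : List (Finset ℕ)) ++ B :: Y0 :: Y' = B :: Y0 :: Y' from rfl] at hdiv ⊢
        rw [deleteB_min hs hmin]
        obtain ⟨h1, h2, h3⟩ := shape_min_spec hdiv hs
        exact ⟨h1, by simp, h2, h3⟩
  · rw [List.concat_eq_append] at *
    cases Y with
    | nil =>
        have he : (X' ++ [P]) ++ B :: [] = X' ++ [P, B] := by simp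
        rw [he] at hdiv ⊢
        rw [deleteB_last hdiv.ord hs]
        obtain ⟨h1, h2, h3⟩ := shape_last_spec hdiv hs
        refine ⟨h1, by simp, h2, h3⟩
    | cons Y0 Y' =>
        have he : (X' ++ [P]) ++ B :: Y0 :: Y' = X' ++ P :: B :: Y0 :: Y' := by simp
        rw [he] at hdiv ⊢
        rw [deleteB_mid hdiv.ord hs]
        obtain ⟨h1, h2, h3⟩ := shape_mid_spec hdiv hs
        refine ⟨h1, by simp, h2, h3⟩
open Classical in
noncomputable def admSet (C : List (Finset ℕ)) (S : Finset ℕ) : Finset ℕ :=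
  S.filter (AdmissibleB C)

theorem mem_admSet {C : List (Finset ℕ)} {S : Finset ℕ} (hdiv : DivS C S) {s : ℕ} :
    s ∈ admSet C S ↔ AdmissibleB C s := by
  classical
  constructor
  · intro h
    exact (Finset.mem_filter.1 (by simpa [admSet] using h)).2
  · intro h
    have hsS := ((admissibleB_iff hdiv).1 h).1
    simp only [admSet]
    convert Finset.mem_filter.2 ⟨hsS, h⟩ using 2

theorem isCPermB_cons_iff {C : List (Finset ℕ)} {s : ℕ} {w : List ℕ} :
    IsCPermB C (s :: w) ↔ AdmissibleB C s ∧ IsCPermB (deleteB C s) w := Iff.rfl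

theorem not_isCPermB_nil {C : List (Finset ℕ)} {S : Finset ℕ} (hdiv : DivS C S)
    (hne : S.Nonempty) : ¬ IsCPermB C [] := by
  intro hw
  obtain ⟨x, hx⟩ := hne
  obtain ⟨B, hB, hmem⟩ := hdiv.cover x hx
  have : B = ∅ := hw B hB
  rw [this] at hmem
  simp at hmem

theorem cperm_finite : ∀ (n : ℕ) (S : Finset ℕ) (C : List (Finset ℕ)), S.card = n →
    C.length = n → DivS C S → {w : List ℕ | IsCPermB C w}.Finite := by
  intro n
  induction n using Nat.strong_induction_on with
  | _ n IH =>
    intro S C hS hlen hdiv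
    rcases Nat.eq_zero_or_pos n with rfl | hpos
    · apply Set.Finite.subset (Set.finite_singleton ([] : List ℕ))
      intro w hw
      cases w with
      | nil => rfl
      | cons s w' =>
          have hadm : AdmissibleB C s := hw.1
          have hsS := ((admissibleB_iff hdiv).1 hadm).1
          have : S.Nonempty := ⟨s, hsS⟩
          rw [← Finset.card_pos] at this
          omega
    · apply Set.Finite.subset (Set.Finite.biUnion (admSet C S).finite_toSet
        (t := fun s => (s :: ·) '' {w : List ℕ | IsCPermB (deleteB C s) w}) ?_)
      · intro w hw
        cases w with
        | nil =>
            exact absurd hw (not_isCPermB_nil hdiv (Finset.card_pos.1 (by omega)))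
        | cons s w' =>
            have hadm : AdmissibleB C s := hw.1
            simp only [Set.mem_iUnion]
            exact ⟨s, (mem_admSet hdiv).2 hadm, w', hw.2, rfl⟩
      · intro s hs
        have hadm := (mem_admSet hdiv).1 hs
        obtain ⟨hsS, hdiv', hlen', -, -⟩ := delete_spec hdiv (by omega) hadm
        have hcard' : (S.erase s).card = n - 1 := by
          rw [Finset.card_erase_of_mem hsS, hS]
        exact Set.Finite.image _ (IH (n - 1) (by omega) _ _ hcard' (by omega) hdiv')

theorem nat_card_sigma {ι : Type*} [Fintype ι] (f : ι → Type*) [∀ i, Finite (f i)] :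
    Nat.card (Σ i, f i) = ∑ i, Nat.card (f i) := by
  letI : ∀ i, Fintype (f i) := fun i => Fintype.ofFinite _
  simp only [Nat.card_eq_fintype_card]
  exact Fintype.card_sigma

theorem card_step {C : List (Finset ℕ)} {S : Finset ℕ} (hdiv : DivS C S)
    (hlen : C.length = S.card) (hne : S.Nonempty) :
    Nat.card {w : List ℕ // IsCPermB C w} =
      ∑ s ∈ admSet C S, Nat.card {w : List ℕ // IsCPermB (deleteB C s) w} := by
  have e : {w : List ℕ // IsCPermB C w} ≃
      Σ s : {x // x ∈ admSet C S}, {w : List ℕ // IsCPermB (deleteB C s.1) w} :=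
    { toFun := fun p =>
        match p with
        | ⟨[], hw⟩ => absurd hw (not_isCPermB_nil hdiv hne)
        | ⟨s :: w, hw⟩ => ⟨⟨s, (mem_admSet hdiv).2 hw.1⟩, ⟨w, hw.2⟩⟩
      invFun := fun p => ⟨p.1.1 :: p.2.1, ⟨(mem_admSet hdiv).1 p.1.2, p.2.2⟩⟩
      left_inv := by
        rintro ⟨w, hw⟩
        cases w with
        | nil => exact absurd hw (not_isCPermB_nil hdiv hne)
        | cons s w' => rfl
      right_inv := by rintro ⟨⟨s, hs⟩, ⟨w, hw⟩⟩; rfl }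
  haveI : ∀ s : {x // x ∈ admSet C S}, Finite {w : List ℕ // IsCPermB (deleteB C s.1) w} := by
    rintro ⟨s, hs⟩
    have hadm := (mem_admSet hdiv).1 hs
    obtain ⟨hsS, hdiv', hlen', -, -⟩ := delete_spec hdiv hlen hadm
    exact (cperm_finite (S.erase s).card _ _ rfl
      (by rw [hlen', hlen, Finset.card_erase_of_mem hsS]) hdiv').to_subtype
  rw [Nat.card_congr e, nat_card_sigma]
  exact Finset.sum_coe_sort (admSet C S)
    (fun s => Nat.card {w : List ℕ // IsCPermB (deleteB C s) w})
theorem geom_sum_nat (k m : ℕ) :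
    k ^ m + ∑ a ∈ Finset.range m, k ^ a * (k + 1) ^ (m - 1 - a) = (k + 1) ^ m := by
  induction m with
  | zero => simp
  | succ m ih =>
      have hpeel : ∑ a ∈ Finset.range (m + 1), k ^ a * (k + 1) ^ (m + 1 - 1 - a)
          = (k + 1) ^ m + k * ∑ a ∈ Finset.range m, k ^ a * (k + 1) ^ (m - 1 - a) := by
        rw [Finset.sum_range_succ']
        have h1 : ∀ a ∈ Finset.range m, k ^ (a + 1) * (k + 1) ^ (m + 1 - 1 - (a + 1))
            = k * (k ^ a * (k + 1) ^ (m - 1 - a)) := by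
          intro a ha
          rw [Finset.mem_range] at ha
          have : m + 1 - 1 - (a + 1) = m - 1 - a := by omega
          rw [this, pow_succ]
          ring
        rw [Finset.sum_congr rfl h1, ← Finset.mul_sum]
        simp [add_comm]
      rw [hpeel]
      calc k ^ (m + 1) + ((k + 1) ^ m + k * ∑ a ∈ Finset.range m, k ^ a * (k + 1) ^ (m - 1 - a))
          = (k ^ m + ∑ a ∈ Finset.range m, k ^ a * (k + 1) ^ (m - 1 - a)) * k + (k + 1) ^ m := by
            ring
        _ = (k + 1) ^ m * k + (k + 1) ^ m := by rw [ih]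
        _ = (k + 1) ^ (m + 1) := by ring

theorem filter_lt_max' {B : Finset ℕ} (hne : B.Nonempty) :
    B.filter (fun t => t < B.max' hne) = B.erase (B.max' hne) := by
  ext t
  simp only [Finset.mem_filter, Finset.mem_erase]
  constructor
  · rintro ⟨ht, hlt⟩
    exact ⟨_root_.ne_of_lt hlt, ht⟩
  · rintro ⟨hne', ht⟩
    exact ⟨ht, lt_of_le_of_ne (B.le_max' t ht) hne'⟩

theorem sum_rank : ∀ (n : ℕ) (B : Finset ℕ), B.card = n → ∀ f : ℕ → ℕ,
    ∑ s ∈ B, f (B.filter (fun t => t < s)).card = ∑ a ∈ Finset.range n, f a := by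
  intro n
  induction n with
  | zero =>
      intro B hB f
      rw [Finset.card_eq_zero.1 hB]
      simp
  | succ m ih =>
      intro B hB f
      have hne : B.Nonempty := by rw [← Finset.card_pos, hB]; omega
      set M := B.max' hne with hM
      have hMm : M ∈ B := B.max'_mem hne
      have hcard_erase : (B.erase M).card = m := by
        rw [Finset.card_erase_of_mem hMm, hB]
        omega
      have h2 : ∀ s ∈ B.erase M, B.filter (fun t => t < s)
          = (B.erase M).filter (fun t => t < s) := by
        intro s hsm
        rw [Finset.mem_erase] at hsm
        ext t
        simp only [Finset.mem_filter, Finset.mem_erase]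
        constructor
        · rintro ⟨ht, hlt⟩
          have hsM : s < M := lt_of_le_of_ne (B.le_max' s hsm.2) hsm.1
          exact ⟨⟨by omega, ht⟩, hlt⟩
        · rintro ⟨⟨-, ht⟩, hlt⟩
          exact ⟨ht, hlt⟩
      rw [← Finset.add_sum_erase _ _ hMm, filter_lt_max' hne, hcard_erase,
        Finset.sum_congr rfl (fun s hs => by rw [h2 s hs]), ih (B.erase M) hcard_erase f,
        Finset.sum_range_succ]
      omega

theorem Wt_eq_prod : ∀ (C : List (Finset ℕ)) (k : ℕ),
    Wt C k = ∏ i ∈ Finset.range C.length, (k + i) ^ ((C.getD i ∅).card) := by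
  intro C
  induction C with
  | nil => intro k; simp
  | cons B T ih =>
      intro k
      rw [Wt_cons, List.length_cons, Finset.prod_range_succ', ih (k + 1)]
      have h1 : ∀ i ∈ Finset.range T.length, (k + (i + 1)) ^ (((B :: T).getD (i + 1) ∅).card)
          = (k + 1 + i) ^ ((T.getD i ∅).card) := by
        intro i hi
        rw [List.getD_cons_succ]
        congr 1
        omega
      rw [Finset.prod_congr rfl h1]
      simp [mul_comm]
theorem telescope {C : List (Finset ℕ)} (hord : C.Pairwise Rb) (hSD : SDs C) :
    ∀ (Y Z : List (Finset ℕ)), C = Z ++ Y → Z ≠ [] →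
      Wt Z 1 * Wt Y Z.length + (Y.map (fun B => ∑ s ∈ B, Wt (deleteB C s) 1)).sum = Wt C 1 := by
  intro Y
  induction Y with
  | nil =>
      intro Z hC hZ
      rw [hC]
      simp
  | cons B Y₂ ih =>
      intro Z hC hZ
      obtain ⟨X', P, hZ'⟩ := (List.eq_nil_or_concat Z).resolve_left hZ
      rw [List.concat_eq_append] at hZ'
      have hstep : Wt Z 1 * Wt (B :: Y₂) Z.length + ∑ s ∈ B, Wt (deleteB C s) 1
          = Wt (Z ++ [B]) 1 * Wt Y₂ (Z.length + 1) := by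
        subst hZ'
        have hlenZ : (X' ++ [P]).length = X'.length + 1 := by simp
        cases Y₂ with
        | nil =>
            have hCe : C = X' ++ [P, B] := by rw [hC]; simp
            have hordC : (X' ++ [P, B]).Pairwise Rb := hCe ▸ hord
            have hsd : B.card ≤ 1 := by
              have := hSD [B] ⟨X' ++ [P], by rw [hCe]; simp⟩
              simpa [csum] using this
            rcases Nat.le_one_iff_eq_zero_or_eq_one.1 hsd with h0 | h1
            · rw [Finset.card_eq_zero.1 h0]
              simp [Wt_append, hlenZ]
            · obtain ⟨s, hsB⟩ := Finset.card_eq_one.1 h1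
              subst hsB
              have hs : s ∈ ({s} : Finset ℕ) := Finset.mem_singleton_self s
              have hdel : deleteB C s = X' ++ [P ∪ ({s} : Finset ℕ).erase s] := by
                rw [hCe]
                exact deleteB_last hordC hs
              have herase : ({s} : Finset ℕ).erase s = ∅ := by simp
              rw [Finset.sum_singleton, hdel, herase, Finset.union_empty]
              simp only [Wt_append, Wt_cons, Wt_nil, hlenZ, Finset.card_singleton]
              ring
        | cons Y0 Y'' =>
            have hCe : C = X' ++ P :: B :: Y0 :: Y'' := by rw [hC]; simp
            have hordC : (X' ++ P :: B :: Y0 :: Y'').Pairwise Rb := hCe ▸ hord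
            have hpR := (List.pairwise_append.1 hordC).2.1
            rw [List.pairwise_cons] at hpR
            obtain ⟨hP, hpR⟩ := hpR
            rw [List.pairwise_cons] at hpR
            obtain ⟨hB, -⟩ := hpR
            have hRPB : Rb P B := hP B (by simp)
            have hRBY0 : Rb B Y0 := hB Y0 (by simp)
            have hWdel : ∀ s ∈ B, Wt (deleteB C s) 1
                = (Wt X' 1 * ((X'.length + 1) ^ P.card
                    * ((X'.length + 2) ^ Y0.card * Wt Y'' (X'.length + 3))))
                  * ((X'.length + 1) ^ (B.filter (fun t => t < s)).card
                    * (X'.length + 2) ^ (B.card - 1 - (B.filter (fun t => t < s)).card)) := by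
              intro s hs
              have hdel := deleteB_mid hordC hs
              rw [hCe, hdel, Wt_append, Wt_cons, Wt_cons]
              have hcard1 : (P ∪ B.filter (fun t => t < s)).card
                  = P.card + (B.filter (fun t => t < s)).card :=
                Finset.card_union_of_disjoint
                  ((hRPB.mono (le_refl _) (Finset.filter_subset _ _)).disjoint)
              have hcard2 : ((B.filter (fun t => s < t)) ∪ Y0).card
                  = (B.card - 1 - (B.filter (fun t => t < s)).card) + Y0.card := by
                rw [Finset.card_union_of_disjoint
                  ((hRBY0.mono (Finset.filter_subset _ _) (le_refl _)).disjoint)]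
                have h3 := lo_hi_card hs
                omega
              rw [hcard1, hcard2]
              rw [show 1 + X'.length = X'.length + 1 from by omega,
                show X'.length + 1 + 1 + 1 = X'.length + 3 from by omega,
                show X'.length + 1 + 1 = X'.length + 2 from by omega]
              rw [pow_add, pow_add]
              ring
            rw [Finset.sum_congr rfl hWdel,
              sum_rank B.card B rfl (fun a =>
                (Wt X' 1 * ((X'.length + 1) ^ P.card
                  * ((X'.length + 2) ^ Y0.card * Wt Y'' (X'.length + 3))))
                * ((X'.length + 1) ^ a * (X'.length + 2) ^ (B.card - 1 - a))),
              ← Finset.mul_sum]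
            have hgeom := geom_sum_nat (X'.length + 1) B.card
            have hx2 : X'.length + 1 + 1 = X'.length + 2 := by omega
            rw [hx2] at hgeom
            simp only [Wt_append, Wt_cons, Wt_nil, hlenZ, List.length_append,
              List.length_cons, List.length_nil]
            rw [show 1 + X'.length = X'.length + 1 from by omega]
            rw [show X'.length + 1 + 1 + 1 = X'.length + 3 from by omega]
            rw [show 1 + (X'.length + 1) = X'.length + 2 from by omega]
            rw [show X'.length + 1 + 2 = X'.length + 3 from by omega]
            rw [show X'.length + 1 + 1 = X'.length + 2 from by omega]
            trans (Wt X' 1 * ((X'.length + 1) ^ P.card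
                * ((X'.length + 2) ^ Y0.card * Wt Y'' (X'.length + 3))))
              * ((X'.length + 1) ^ B.card
                + ∑ a ∈ Finset.range B.card,
                    (X'.length + 1) ^ a * (X'.length + 2) ^ (B.card - 1 - a))
            · ring
            · rw [hgeom]
              ring
      rw [List.map_cons, List.sum_cons, ← add_assoc, hstep]
      have hc2 : C = (Z ++ [B]) ++ Y₂ := by rw [hC]; simp
      have h := ih (Z ++ [B]) hc2 (by simp)
      have hlen2 : (Z ++ [B]).length = Z.length + 1 := by simp
      rw [hlen2] at h
      exact h
theorem main_count : ∀ (n : ℕ) (S : Finset ℕ) (C : List (Finset ℕ)), S.card = n →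
    C.length = n → DivS C S →
    (SDs C → Nat.card {w : List ℕ // IsCPermB C w} = Wt C 1) ∧
    (SBs C → Nat.card {w : List ℕ // IsCPermB C w} = n !) := by
  intro n
  induction n using Nat.strong_induction_on with
  | _ n IH =>
    intro S C hS hlen hdiv
    rcases Nat.eq_zero_or_pos n with rfl | hpos
    · have hCnil : C = [] := List.length_eq_zero_iff.1 (by omega)
      subst hCnil
      haveI : Nonempty {w : List ℕ // IsCPermB ([] : List (Finset ℕ)) w} :=
        ⟨⟨[], fun B hB => absurd hB (fun h => List.not_mem_nil h)⟩⟩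
      haveI : Subsingleton {w : List ℕ // IsCPermB ([] : List (Finset ℕ)) w} := by
        constructor
        rintro ⟨w₁, hw₁⟩ ⟨w₂, hw₂⟩
        have hn : ∀ w : List ℕ, IsCPermB ([] : List (Finset ℕ)) w → w = [] := by
          intro w hw
          cases w with
          | nil => rfl
          | cons s w' =>
              obtain ⟨i, hi, -, -⟩ := hw.1
              simp at hi
        simp [Subtype.ext_iff, hn w₁ hw₁, hn w₂ hw₂]
      rw [Nat.card_unique]
      simp [Nat.factorial]
    · have hne : S.Nonempty := Finset.card_pos.1 (by omega)
      cases C with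
      | nil => simp at hlen; omega
      | cons B0 T =>
        have hstep := card_step hdiv (by omega) hne
        have hlenT : T.length = n - 1 := by simp at hlen; omega
        have htot : csum (B0 :: T) = n := by rw [hdiv.csum_eq, hS]
        constructor
        · intro hSD
          have hcount : ∀ s ∈ admSet (B0 :: T) S,
              Nat.card {w : List ℕ // IsCPermB (deleteB (B0 :: T) s) w}
                = Wt (deleteB (B0 :: T) s) 1 := by
            intro s hs
            have hadm := (mem_admSet hdiv).1 hs
            obtain ⟨hsS, hdiv', hlen', hSD', -⟩ := delete_spec hdiv (by omega) hadm
            exact (IH (n - 1) (by omega) (S.erase s) _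
              (by rw [Finset.card_erase_of_mem hsS, hS])
              (by rw [hlen']; simp; omega) hdiv').1 (hSD' hSD)
          rw [hstep, Finset.sum_congr rfl hcount]
          have hTsuf : csum T ≤ T.length := hSD T ⟨[B0], rfl⟩
          have hB0 : B0.Nonempty := by
            rw [← Finset.card_pos]
            rw [csum_cons] at htot
            omega
          have hm₀B : B0.min' hB0 ∈ B0 := B0.min'_mem hB0
          have hm₀S : B0.min' hB0 ∈ S := hdiv.sub B0 (by simp) hm₀B
          have hA : admSet (B0 :: T) S = insert (B0.min' hB0) (S \ B0) := by
            ext s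
            rw [mem_admSet hdiv, admissibleB_iff hdiv]
            simp only [Finset.mem_insert, Finset.mem_sdiff, List.getD_cons_zero]
            constructor
            · rintro ⟨hsS, h | h⟩
              · exact Or.inr ⟨hsS, h⟩
              · by_cases hsB : s ∈ B0
                · exact Or.inl (le_antisymm (h _ hm₀B) (B0.min'_le s hsB))
                · exact Or.inr ⟨hsS, hsB⟩
            · rintro (rfl | ⟨hsS, hsB⟩)
              · exact ⟨hm₀S, Or.inr (fun t ht => B0.min'_le t ht)⟩
              · exact ⟨hsS, Or.inl hsB⟩
          have hnotmem : B0.min' hB0 ∉ S \ B0 := by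
            simp only [Finset.mem_sdiff, not_and, not_not]
            exact fun _ => hm₀B
          rw [hA, Finset.sum_insert hnotmem]
          have hsplit := (hdiv.tail).sum_blocks (fun s => Wt (deleteB (B0 :: T) s) 1)
          rw [hsplit]
          have htel := telescope hdiv.ord hSD T [B0] rfl (by simp)
          have h1 : Wt [B0] 1 * Wt T ([B0] : List (Finset ℕ)).length = Wt T 1 := by
            simp
          rw [h1] at htel
          have hWm₀ : Wt (deleteB (B0 :: T) (B0.min' hB0)) 1 = Wt T 1 := by
            cases T with
            | nil => rw [deleteB_single hm₀B]
            | cons Y0 Y' =>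
                rw [deleteB_min hm₀B (fun t ht => B0.min'_le t ht), Wt_cons, Wt_cons,
                  one_pow, one_pow]
          rw [hWm₀]
          exact htel
        · intro hSB
          have hB0card : B0.card ≤ 1 := by
            have h1 := hSB T ⟨[B0], rfl⟩
            rw [csum_cons] at htot
            omega
          have hcount : ∀ s ∈ admSet (B0 :: T) S,
              Nat.card {w : List ℕ // IsCPermB (deleteB (B0 :: T) s) w} = (n - 1)! := by
            intro s hs
            have hadm := (mem_admSet hdiv).1 hs
            obtain ⟨hsS, hdiv', hlen', -, hSB'⟩ := delete_spec hdiv (by omega) hadm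
            exact (IH (n - 1) (by omega) (S.erase s) _
              (by rw [Finset.card_erase_of_mem hsS, hS])
              (by rw [hlen']; simp; omega) hdiv').2 (hSB' hSB)
          have hA : admSet (B0 :: T) S = S := by
            ext s
            rw [mem_admSet hdiv, admissibleB_iff hdiv]
            simp only [List.getD_cons_zero]
            constructor
            · rintro ⟨hsS, -⟩
              exact hsS
            · intro hsS
              refine ⟨hsS, ?_⟩
              by_cases hsB : s ∈ B0
              · refine Or.inr (fun t ht => ?_)
                rw [Finset.card_le_one.1 hB0card t ht s hsB]
              · exact Or.inl hsB
          rw [hstep, Finset.sum_congr rfl hcount, hA, Finset.sum_const, smul_eq_mul, hS]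
          obtain ⟨m, rfl⟩ : ∃ m, n = m + 1 := ⟨n - 1, by omega⟩
          simp [Nat.factorial_succ]
/-- if `C` is superdiagonal, the number of type B `C`-permutations is
`1^{|C₁|} 2^{|C₂|} ⋯ n^{|C_n|}`; if `C` is subdiagonal, it is `n!`. -/
theorem cpermB_diagonal (n : ℕ) (S : Finset ℕ) (C : List (Finset ℕ))
    (hS : S.card = n) (hlen : C.length = n) (hC : IsDivision C S) :
    (Superdiagonal C →
      Nat.card {w : List ℕ // IsCPermB C w} =
        ∏ i ∈ Finset.range n, (i + 1) ^ (C.getD i ∅).card) ∧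
    (Subdiagonal C → Nat.card {w : List ℕ // IsCPermB C w} = n !) := by
  have hdiv := DivS.of_isDivision hC
  have htot : csum C = C.length := by rw [hdiv.csum_eq, hS, hlen]
  have hmain := main_count n S C hS hlen hdiv
  constructor
  · intro hSuper
    rw [hmain.1 ((superdiagonal_iff htot).1 hSuper), Wt_eq_prod, hlen]
    exact Finset.prod_congr rfl (fun i _ => by rw [add_comm])
  · intro hSub
    exact hmain.2 (subdiagonal_iff.1 hSub)

end MixedEulerian
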